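/- Let k, l be natural numbers and let f : PEquiv (Fin k) (Fin l) be a partial equivalence (a rook diagram) whose domain has cardinality r. Then f factors through its skeleton: there exist a monotone partial equivalence p₂ : PEquiv (Fin k) (Fin r), a permutation σ of Fin r, and a monotone partial equivalence p₁ : PEquiv (Fin r) (Fin l) such that f = (p₂.trans σ.toPEquiv).trans p₁. (Diagrammatically: every rook diagram D has a decomposition D = P₁ ∘ S ∘ P₂ where S is a permutation diagram and P₁, P₂ are planar rook diagrams.) -/

import Mathlib

/-- A rook matrix: every entry is 0 or 1, and there is at most one entry
equal to 1 in each row and in each column. -/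
def IsRookMatrix {l k : ℕ} {R : Type*} [CommRing R]
    (A : Matrix (Fin l) (Fin k) R) : Prop :=
  (∀ i j, A i j = 0 ∨ A i j = 1) ∧
  (∀ i j j', A i j = 1 → A i j' = 1 → j = j') ∧
  (∀ i i' j, A i j = 1 → A i' j = 1 → i = i')

/-- Pseudo-echelon form: if rows `i < i'` contain nonzero entries in columns
`j` and `j'` respectively, then `j < j'`. -/
def IsPseudoEchelon {l k : ℕ} {R : Type*} [CommRing R]
    (A : Matrix (Fin l) (Fin k) R) : Prop :=
  ∀ i i' j j', i < i' → A i j ≠ 0 → A i' j' ≠ 0 → j < j'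

/-- A permutation matrix: the 0–1 matrix of some permutation `σ`, with
entry 1 exactly in the positions `(σ j, j)`. -/
def IsPermMatrix {n : ℕ} {R : Type*} [CommRing R]
    (S : Matrix (Fin n) (Fin n) R) : Prop :=
  ∃ σ : Equiv.Perm (Fin n), ∀ i j, S i j = if i = σ j then 1 else 0

/-- The matrix `[f]` associated to a partial equivalence (rook diagram)
`f : PEquiv (Fin k) (Fin l)`: the `(q, p)` entry is 1 if `f p = q` and 0
otherwise. -/
def rookMatrixOf {k l : ℕ} (R : Type*) [CommRing R]
    (f : PEquiv (Fin k) (Fin l)) : Matrix (Fin l) (Fin k) R :=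
  fun q p => if f p = some q then 1 else 0

/-- A partial equivalence (rook diagram) is monotone (planar) if for all
`p, q` in its domain, `p < q` implies `f p < f q`. -/
def IsMonotonePE {k l : ℕ} (f : PEquiv (Fin k) (Fin l)) : Prop :=
  ∀ p q i j, i ∈ f p → j ∈ f q → p < q → i < j

/-- PEquiv from an injective function. -/
noncomputable def injPEquiv {m n : ℕ} (g : Fin m → Fin n) (hg : Function.Injective g) :
    PEquiv (Fin m) (Fin n) where
  toFun i := some (g i)
  invFun q := if h : ∃ i, g i = q then some h.choose else none
  inv a b := by
    constructor
    · intro ha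
      by_cases h : ∃ i, g i = b
      · rw [dif_pos h, Option.some_inj] at ha
        simp [Option.mem_def, ← ha, h.choose_spec]
      · rw [dif_neg h] at ha
        simp at ha
    · intro hb
      rw [Option.some_inj] at hb
      subst hb
      have h : ∃ i, g i = g a := ⟨a, rfl⟩
      rw [dif_pos h, Option.some_inj]
      exact hg h.choose_spec

@[simp] theorem injPEquiv_apply {m n : ℕ} (g : Fin m → Fin n) (hg : Function.Injective g)
    (i : Fin m) : injPEquiv g hg i = some (g i) := rfl

theorem injPEquiv_symm_eq_some {m n : ℕ} (g : Fin m → Fin n) (hg : Function.Injective g)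
    (q : Fin n) (i : Fin m) : (injPEquiv g hg).symm q = some i ↔ g i = q := by
  rw [PEquiv.eq_some_iff]
  simp [eq_comm]

theorem injPEquiv_symm_eq_none {m n : ℕ} (g : Fin m → Fin n) (hg : Function.Injective g)
    (q : Fin n) (h : ∀ i, g i ≠ q) : (injPEquiv g hg).symm q = none := by
  show dite _ _ _ = none
  rw [dif_neg]
  rintro ⟨i, hi⟩
  exact h i hi

theorem rook_factors_through_skeleton {k l r : ℕ}
    (f : PEquiv (Fin k) (Fin l))
    (hr : (Finset.univ.filter fun p : Fin k => (f p).isSome).card = r) :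
    ∃ (p₂ : PEquiv (Fin k) (Fin r)) (σ : Equiv.Perm (Fin r))
      (p₁ : PEquiv (Fin r) (Fin l)),
      IsMonotonePE p₂ ∧ IsMonotonePE p₁ ∧
      f = (p₂.trans σ.toPEquiv).trans p₁ := by
  classical
  set D : Finset (Fin k) := Finset.univ.filter fun p => (f p).isSome with hD
  set Rs : Finset (Fin l) := Finset.univ.filter fun q => (f.symm q).isSome with hRs
  have hcard : Rs.card = r := by
    rw [← hr]
    have hRs' : ∀ q ∈ Rs, (f.symm q).isSome := fun q hq => by
      simp only [hRs, Finset.mem_filter] at hq; exact hq.2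
    apply Finset.card_bij (fun q hq => (f.symm q).get (hRs' q hq))
    · intro q hq
      simp only [hD, Finset.mem_filter, Finset.mem_univ, true_and]
      have h1 : (f.symm q).get (hRs' q hq) ∈ f.symm q := Option.get_mem _
      rw [PEquiv.mem_iff_mem] at h1
      simp [Option.mem_def.mp h1]
    · intro q hq q' hq' h
      have h1 : (f.symm q).get (hRs' q hq) ∈ f.symm q := Option.get_mem _
      have h2 : (f.symm q').get (hRs' q' hq') ∈ f.symm q' := Option.get_mem _
      rw [h] at h1
      rw [PEquiv.mem_iff_mem] at h1 h2
      rw [Option.mem_def.mp h1] at h2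
      exact Option.some_inj.mp (Option.mem_def.mp h2)
    · intro p hp
      simp only [hD, Finset.mem_filter, Finset.mem_univ, true_and] at hp
      obtain ⟨q, hq⟩ := Option.isSome_iff_exists.mp hp
      have hq' : f.symm q = some p := (PEquiv.eq_some_iff f).mpr hq
      refine ⟨q, ?_, ?_⟩
      · simp [hRs, Option.isSome_iff_exists, hq']
      · simp [hq']
  let e₂ := D.orderIsoOfFin hr
  let e₁ := Rs.orderIsoOfFin hcard
  have he₂inj : Function.Injective (fun i => (e₂ i : Fin k)) :=
    fun a b h => e₂.injective (Subtype.ext h)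
  have he₁inj : Function.Injective (fun i => (e₁ i : Fin l)) :=
    fun a b h => e₁.injective (Subtype.ext h)
  have hmem : ∀ i : Fin r, (f (e₂ i)).isSome := by
    intro i
    have := (e₂ i).2
    simp only [hD, Finset.mem_filter] at this
    exact this.2
  have hsome : ∀ i : Fin r, f (e₂ i) = some ((f (e₂ i)).get (hmem i)) :=
    fun i => (Option.some_get _).symm
  have hmemR : ∀ i : Fin r, ((f (e₂ i)).get (hmem i)) ∈ Rs := by
    intro i
    have h1 : f.symm ((f (e₂ i)).get (hmem i)) = some (e₂ i) :=
      (PEquiv.eq_some_iff f).mpr (hsome i)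
    simp [hRs, Option.isSome_iff_exists, h1]
  let F : Fin r → Fin r := fun i => e₁.symm ⟨(f (e₂ i)).get (hmem i), hmemR i⟩
  have hFinj : Function.Injective F := by
    intro a b h
    have h1 := e₁.symm.injective h
    have h2 : (f (e₂ a)).get (hmem a) = (f (e₂ b)).get (hmem b) := Subtype.ext_iff.mp h1
    have ha := hsome a
    rw [h2] at ha
    have : (e₂ a : Fin k) = e₂ b :=
      f.inj (Option.mem_def.mpr ha) (Option.mem_def.mpr (hsome b))
    exact he₂inj this
  have hFbij : Function.Bijective F := (Finite.injective_iff_bijective).mp hFinj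
  let σ : Equiv.Perm (Fin r) := Equiv.ofBijective F hFbij
  let p₂ : PEquiv (Fin k) (Fin r) := (injPEquiv (fun i => (e₂ i : Fin k)) he₂inj).symm
  let p₁ : PEquiv (Fin r) (Fin l) := injPEquiv (fun i => (e₁ i : Fin l)) he₁inj
  refine ⟨p₂, σ, p₁, ?_, ?_, ?_⟩
  · intro p q i j hi hj hpq
    rw [Option.mem_def, show p₂ p = (injPEquiv _ he₂inj).symm p from rfl,
      injPEquiv_symm_eq_some] at hi
    rw [Option.mem_def, show p₂ q = (injPEquiv _ he₂inj).symm q from rfl,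
      injPEquiv_symm_eq_some] at hj
    by_contra hij
    push_neg at hij
    rcases lt_or_eq_of_le hij with h | h
    · have := e₂.strictMono h
      rw [← Subtype.coe_lt_coe] at this
      rw [hi, hj] at this
      exact absurd hpq (not_lt.mpr this.le)
    · subst h
      exact absurd (hi.symm.trans hj) hpq.ne
  · intro p q i j hi hj hpq
    simp only [Option.mem_def, show ∀ x, p₁ x = some (e₁ x : Fin l) from fun _ => rfl,
      Option.some_inj] at hi hj
    subst hi; subst hj
    have := e₁.strictMono hpq
    rwa [← Subtype.coe_lt_coe] at this
  · ext p q
    constructor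
    · intro hq
      have hp : (f p).isSome := by simp [Option.mem_def.mp hq]
      have hpD : p ∈ D := by simp [hD, hp]
      set i : Fin r := e₂.symm ⟨p, hpD⟩ with hi
      have he : (e₂ i : Fin k) = p := by simp [hi]
      rw [PEquiv.trans_eq_some]
      refine ⟨F i, ?_, ?_⟩
      · rw [PEquiv.trans_eq_some]
        refine ⟨i, ?_, ?_⟩
        · exact (injPEquiv_symm_eq_some _ he₂inj p i).mpr he
        · simp [σ, Equiv.toPEquiv_apply, Equiv.ofBijective_apply]
      · show some (e₁ (F i) : Fin l) = some q
        simp only [F, OrderIso.apply_symm_apply]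
        rw [Option.some_inj]
        have : f (e₂ i) = some q := by rw [he]; exact Option.mem_def.mp hq
        simp [this]
    · intro hq
      rw [PEquiv.trans_eq_some] at hq
      obtain ⟨j, hj, hq⟩ := hq
      rw [PEquiv.trans_eq_some] at hj
      obtain ⟨i, hi, hji⟩ := hj
      rw [injPEquiv_symm_eq_some] at hi
      simp only [Equiv.toPEquiv_apply, Option.some_inj] at hji
      subst hji
      have : (e₁ (σ i) : Fin l) = q := Option.some_inj.mp hq
      have hσ : σ i = F i := rfl
      rw [hσ] at this
      simp only [F, OrderIso.apply_symm_apply] at this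
      rw [← hi, hsome i, this]
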